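/- (Edgeworth swaption price formula.) For all reals ν, B, c, μ3, μ4, the Edgeworth price PS₂ := ν·B·∫_c^∞ (z − c) g₂(z) dz satisfies PS₂ = PS₁ + ν·B·φ(c)·(μ3²/72)·(c⁴ − 6c² + 3), where PS₁ := ν·B·∫_c^∞ (z − c) g₁(z) dz is the Gram–Charlier price. -/

import Mathlib

open MeasureTheory Real Set
open Filter Topology

/-- The standard normal density `φ(z) = (2π)^(−1/2) exp(−z²/2)`. -/
noncomputable def φ (z : ℝ) : ℝ := (Real.sqrt (2 * Real.pi))⁻¹ * Real.exp (-z ^ 2 / 2)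

lemma φ_pos (z : ℝ) : 0 < φ z := by
  apply mul_pos (inv_pos.2 (Real.sqrt_pos.2 (by positivity))) (Real.exp_pos _)

lemma hasDerivAt_φ (z : ℝ) : HasDerivAt φ (-z * φ z) z := by
  have h1 : HasDerivAt (fun z : ℝ => -z ^ 2 / 2) (-z) z := by
    have := ((hasDerivAt_pow 2 z).neg).div_const 2
    exact this.congr_deriv (by ring)
  have := (h1.exp).const_mul (Real.sqrt (2 * Real.pi))⁻¹
  exact this.congr_deriv (by unfold φ; ring)

lemma hasDerivAt_mul_φ {P : ℝ → ℝ} {p' z : ℝ} (hP : HasDerivAt P p' z) :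
    HasDerivAt (fun z => P z * φ z) ((p' - z * P z) * φ z) z := by
  have := hP.mul (hasDerivAt_φ z)
  exact this.congr_deriv (by ring)

lemma iteratedDeriv_φ_one : iteratedDeriv 1 φ = fun z => (-z) * φ z := by
  funext z
  rw [iteratedDeriv_one]
  exact (hasDerivAt_φ z).deriv

lemma iteratedDeriv_φ_two : iteratedDeriv 2 φ = fun z => (z ^ 2 - 1) * φ z := by
  funext z
  rw [iteratedDeriv_succ, iteratedDeriv_φ_one]
  have h : HasDerivAt (fun z : ℝ => (-z) * φ z) ((-1 - z * (-z)) * φ z) z :=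
    hasDerivAt_mul_φ (hasDerivAt_id z).neg
  rw [h.deriv]; ring

lemma iteratedDeriv_φ_three : iteratedDeriv 3 φ = fun z => (-z ^ 3 + 3 * z) * φ z := by
  funext z
  rw [iteratedDeriv_succ, iteratedDeriv_φ_two]
  have h : HasDerivAt (fun z : ℝ => (z ^ 2 - 1) * φ z) ((2 * z ^ 1 - z * (z ^ 2 - 1)) * φ z) z :=
    hasDerivAt_mul_φ ((hasDerivAt_pow 2 z).sub_const 1)
  rw [h.deriv]; ring

lemma iteratedDeriv_φ_four : iteratedDeriv 4 φ = fun z => (z ^ 4 - 6 * z ^ 2 + 3) * φ z := by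
  funext z
  rw [iteratedDeriv_succ, iteratedDeriv_φ_three]
  have h : HasDerivAt (fun z : ℝ => (-z ^ 3 + 3 * z) * φ z)
      (((-(3 * z ^ 2) + 3 * 1) - z * (-z ^ 3 + 3 * z)) * φ z) z :=
    hasDerivAt_mul_φ (((hasDerivAt_pow 3 z).neg).add ((hasDerivAt_id z).const_mul 3))
  rw [h.deriv]; ring_nf

lemma iteratedDeriv_φ_five : iteratedDeriv 5 φ = fun z => (-z ^ 5 + 10 * z ^ 3 - 15 * z) * φ z := by
  funext z
  rw [iteratedDeriv_succ, iteratedDeriv_φ_four]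
  have h : HasDerivAt (fun z : ℝ => (z ^ 4 - 6 * z ^ 2 + 3) * φ z)
      (((4 * z ^ 3 - 6 * (2 * z ^ 1)) - z * (z ^ 4 - 6 * z ^ 2 + 3)) * φ z) z :=
    hasDerivAt_mul_φ ((((hasDerivAt_pow 4 z).sub ((hasDerivAt_pow 2 z).const_mul 6))).add_const 3)
  rw [h.deriv]; ring_nf

lemma iteratedDeriv_φ_six :
    iteratedDeriv 6 φ = fun z => (z ^ 6 - 15 * z ^ 4 + 45 * z ^ 2 - 15) * φ z := by
  funext z
  rw [iteratedDeriv_succ, iteratedDeriv_φ_five]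
  have h : HasDerivAt (fun z : ℝ => (-z ^ 5 + 10 * z ^ 3 - 15 * z) * φ z)
      (((-(5 * z ^ 4) + 10 * (3 * z ^ 2) - 15 * 1) - z * (-z ^ 5 + 10 * z ^ 3 - 15 * z)) * φ z) z :=
    hasDerivAt_mul_φ ((((hasDerivAt_pow 5 z).neg).add ((hasDerivAt_pow 3 z).const_mul 10)).sub
      ((hasDerivAt_id z).const_mul 15))
  rw [h.deriv]; ring_nf

/-- The Hermite polynomials defined by `H n z * φ z = φ⁽ⁿ⁾ z`. -/
noncomputable def H (n : ℕ) (z : ℝ) : ℝ := iteratedDeriv n φ z / φ z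

lemma H_three (z : ℝ) : H 3 z = -z ^ 3 + 3 * z := by
  rw [H, iteratedDeriv_φ_three]
  exact mul_div_cancel_right₀ _ (φ_pos z).ne'

lemma H_four (z : ℝ) : H 4 z = z ^ 4 - 6 * z ^ 2 + 3 := by
  rw [H, iteratedDeriv_φ_four]
  exact mul_div_cancel_right₀ _ (φ_pos z).ne'

lemma H_six (z : ℝ) : H 6 z = z ^ 6 - 15 * z ^ 4 + 45 * z ^ 2 - 15 := by
  rw [H, iteratedDeriv_φ_six]
  exact mul_div_cancel_right₀ _ (φ_pos z).ne'

lemma continuous_φ : Continuous φ := by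
  unfold φ; fun_prop

lemma integrable_pow_mul_φ (n : ℕ) : Integrable (fun z : ℝ => z ^ n * φ z) := by
  have hg : Integrable (fun z : ℝ =>
      ((n.factorial : ℝ) * Real.exp 1 * (Real.sqrt (2 * Real.pi))⁻¹) * Real.exp (-(1/4 : ℝ) * z ^ 2)) :=
    (integrable_exp_neg_mul_sq (by norm_num)).const_mul _
  apply hg.mono'
  · exact ((continuous_pow n).mul continuous_φ).aestronglyMeasurable
  · filter_upwards with z
    rw [Real.norm_eq_abs, abs_mul, abs_of_pos (φ_pos z), abs_pow]
    unfold φ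
    have h1 : |z| ^ n ≤ (n.factorial : ℝ) * Real.exp |z| := by
      have := Real.pow_div_factorial_le_exp (x := |z|) (abs_nonneg z) n
      rw [div_le_iff₀ (by positivity : (0:ℝ) < (n.factorial : ℝ))] at this
      linarith [this]
    have h2 : Real.exp |z| * Real.exp (-z ^ 2 / 2) ≤ Real.exp 1 * Real.exp (-(1/4 : ℝ) * z ^ 2) := by
      rw [← Real.exp_add, ← Real.exp_add]
      apply Real.exp_le_exp.2
      nlinarith [sq_nonneg (|z| - 2), sq_abs z, abs_nonneg z]
    calc |z| ^ n * ((Real.sqrt (2 * Real.pi))⁻¹ * Real.exp (-z ^ 2 / 2))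
        ≤ ((n.factorial : ℝ) * Real.exp |z|) * ((Real.sqrt (2 * Real.pi))⁻¹ * Real.exp (-z ^ 2 / 2)) := by
          apply mul_le_mul_of_nonneg_right h1 (by positivity)
      _ = (n.factorial : ℝ) * (Real.sqrt (2 * Real.pi))⁻¹ * (Real.exp |z| * Real.exp (-z ^ 2 / 2)) := by ring
      _ ≤ (n.factorial : ℝ) * (Real.sqrt (2 * Real.pi))⁻¹ * (Real.exp 1 * Real.exp (-(1/4:ℝ) * z ^ 2)) := by
          apply mul_le_mul_of_nonneg_left h2 (by positivity)
      _ = (n.factorial : ℝ) * Real.exp 1 * (Real.sqrt (2 * Real.pi))⁻¹ * Real.exp (-(1/4:ℝ) * z ^ 2) := by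
          ring

lemma tendsto_exp_quad : Tendsto (fun z : ℝ => Real.exp (z - z ^ 2 / 2)) atTop (𝓝 0) := by
  have ha : Tendsto (fun z : ℝ => z - 1) atTop atTop :=
    tendsto_atTop_add_const_right _ (-1) tendsto_id
  have hb : Tendsto (fun z : ℝ => (z - 1) ^ 2) atTop atTop :=
    (tendsto_pow_atTop (n := 2) (by norm_num)).comp ha
  have h2 : Tendsto (fun z : ℝ => (z - 1) ^ 2 / 2) atTop atTop :=
    hb.atTop_div_const (by norm_num)
  have h3 : Tendsto (fun z : ℝ => -((z - 1) ^ 2 / 2) + 1 / 2) atTop atBot :=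
    tendsto_atBot_add_const_right _ _ (tendsto_neg_atTop_atBot.comp h2)
  have h1 : Tendsto (fun z : ℝ => z - z ^ 2 / 2) atTop atBot := by
    refine h3.congr fun z => by ring
  exact Real.tendsto_exp_atBot.comp h1

lemma tendsto_pow_mul_φ (n : ℕ) : Tendsto (fun z : ℝ => z ^ n * φ z) atTop (𝓝 0) := by
  have key : Tendsto (fun z : ℝ => (Real.sqrt (2 * Real.pi))⁻¹ *
      ((z ^ n * Real.exp (-z)) * Real.exp (z - z ^ 2 / 2))) atTop (𝓝 0) := by
    have h1 := Real.tendsto_pow_mul_exp_neg_atTop_nhds_zero n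
    have h12 : Tendsto (fun z : ℝ => (z ^ n * Real.exp (-z)) * Real.exp (z - z ^ 2 / 2))
        atTop (𝓝 0) := by simpa using h1.mul tendsto_exp_quad
    simpa using h12.const_mul (Real.sqrt (2 * Real.pi))⁻¹
  refine key.congr fun z => ?_
  unfold φ
  rw [mul_assoc, ← Real.exp_add]
  have h : -z + (z - z ^ 2 / 2) = -z ^ 2 / 2 := by ring
  rw [h]; ring

/-- The fourth-order Gram–Charlier density with skewness `μ3` and kurtosis `μ4`. -/
noncomputable def g₁ (μ3 μ4 z : ℝ) : ℝ :=
  φ z * (1 - μ3 / 6 * H 3 z + (μ4 - 3) / 24 * H 4 z)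

/-- The fourth-order Edgeworth density with skewness `μ3` and kurtosis `μ4`. -/
noncomputable def g₂ (μ3 μ4 z : ℝ) : ℝ :=
  g₁ μ3 μ4 z + φ z * (μ3 ^ 2 / 72) * H 6 z

lemma integrable_f6 (c : ℝ) :
    Integrable (fun z : ℝ => (z - c) * ((z ^ 6 - 15 * z ^ 4 + 45 * z ^ 2 - 15) * φ z)) := by
  have heq : (fun z : ℝ => (z - c) * ((z ^ 6 - 15 * z ^ 4 + 45 * z ^ 2 - 15) * φ z)) =
      fun z => z ^ 7 * φ z + (-c) * (z ^ 6 * φ z) + (-15) * (z ^ 5 * φ z) +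
        (15 * c) * (z ^ 4 * φ z) + 45 * (z ^ 3 * φ z) + (-45 * c) * (z ^ 2 * φ z) +
        (-15) * (z ^ 1 * φ z) + (15 * c) * (z ^ 0 * φ z) := by
    funext z; ring
  rw [heq]
  exact ((((((((integrable_pow_mul_φ 7).add ((integrable_pow_mul_φ 6).const_mul _)).add
    ((integrable_pow_mul_φ 5).const_mul _)).add ((integrable_pow_mul_φ 4).const_mul _)).add
    ((integrable_pow_mul_φ 3).const_mul _)).add ((integrable_pow_mul_φ 2).const_mul _)).add
    ((integrable_pow_mul_φ 1).const_mul _)).add ((integrable_pow_mul_φ 0).const_mul _))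

lemma integrable_f1 (c μ3 μ4 : ℝ) : Integrable (fun z : ℝ => (z - c) * g₁ μ3 μ4 z) := by
  have heq : (fun z : ℝ => (z - c) * g₁ μ3 μ4 z) =
      fun z => ((μ4 - 3) / 24) * (z ^ 5 * φ z) + (μ3 / 6 - c * ((μ4 - 3) / 24)) * (z ^ 4 * φ z) +
        (-6 * ((μ4 - 3) / 24) - c * (μ3 / 6)) * (z ^ 3 * φ z) +
        (-3 * (μ3 / 6) + 6 * c * ((μ4 - 3) / 24)) * (z ^ 2 * φ z) +
        (1 + 3 * ((μ4 - 3) / 24) + 3 * c * (μ3 / 6)) * (z ^ 1 * φ z) +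
        (-c * (1 + 3 * ((μ4 - 3) / 24))) * (z ^ 0 * φ z) := by
    funext z
    rw [g₁, H_three, H_four]; ring
  rw [heq]
  exact ((((((integrable_pow_mul_φ 5).const_mul _).add ((integrable_pow_mul_φ 4).const_mul _)).add
    ((integrable_pow_mul_φ 3).const_mul _)).add ((integrable_pow_mul_φ 2).const_mul _)).add
    ((integrable_pow_mul_φ 1).const_mul _)).add ((integrable_pow_mul_φ 0).const_mul _)

noncomputable def F (c z : ℝ) : ℝ :=
  ((z - c) * (-z ^ 5 + 10 * z ^ 3 - 15 * z) - (z ^ 4 - 6 * z ^ 2 + 3)) * φ z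

lemma hasDerivAt_F (c z : ℝ) :
    HasDerivAt (F c) ((z - c) * ((z ^ 6 - 15 * z ^ 4 + 45 * z ^ 2 - 15) * φ z)) z := by
  have hP : HasDerivAt (fun z : ℝ => (z - c) * (-z ^ 5 + 10 * z ^ 3 - 15 * z) -
      (z ^ 4 - 6 * z ^ 2 + 3))
      ((1 * (-z ^ 5 + 10 * z ^ 3 - 15 * z) +
        (z - c) * (-(5 * z ^ 4) + 10 * (3 * z ^ 2) - 15 * 1)) -
        (4 * z ^ 3 - 6 * (2 * z ^ 1))) z := by
    exact (((hasDerivAt_id z).sub_const c).mul ((((hasDerivAt_pow 5 z).neg).add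
      ((hasDerivAt_pow 3 z).const_mul 10)).sub ((hasDerivAt_id z).const_mul 15))).sub
      (((hasDerivAt_pow 4 z).sub ((hasDerivAt_pow 2 z).const_mul 6)).add_const 3)
  have := hasDerivAt_mul_φ hP
  exact this.congr_deriv (by ring)

lemma tendsto_F (c : ℝ) : Tendsto (F c) atTop (𝓝 0) := by
  have heq : F c = fun z => (-1 : ℝ) * (z ^ 6 * φ z) + c * (z ^ 5 * φ z) + 9 * (z ^ 4 * φ z) +
      (-10 * c) * (z ^ 3 * φ z) + (-9) * (z ^ 2 * φ z) + (15 * c) * (z ^ 1 * φ z) +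
      (-3) * (z ^ 0 * φ z) := by
    funext z; rw [F]; ring
  rw [heq]
  have t : ∀ (k : ℕ) (a : ℝ), Tendsto (fun z : ℝ => a * (z ^ k * φ z)) atTop (𝓝 0) := by
    intro k a
    simpa using (tendsto_pow_mul_φ k).const_mul a
  simpa using ((((((t 6 (-1)).add (t 5 c)).add (t 4 9)).add (t 3 (-10 * c))).add
    (t 2 (-9))).add (t 1 (15 * c))).add (t 0 (-3))

lemma key_integral (c : ℝ) :
    ∫ z in Set.Ioi c, (z - c) * ((z ^ 6 - 15 * z ^ 4 + 45 * z ^ 2 - 15) * φ z) =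
      (c ^ 4 - 6 * c ^ 2 + 3) * φ c := by
  have h := integral_Ioi_of_hasDerivAt_of_tendsto' (a := c) (fun x _ => hasDerivAt_F c x)
    ((integrable_f6 c).integrableOn) (tendsto_F c)
  rw [h, F]
  ring

/-- Edgeworth swaption price formula: the Edgeworth price equals the Gram–Charlier
price plus an explicit additional skewness correction. -/
theorem edgeworth_price (ν B c μ3 μ4 : ℝ) :
    ν * B * (∫ z in Set.Ioi c, (z - c) * g₂ μ3 μ4 z) =
      ν * B * (∫ z in Set.Ioi c, (z - c) * g₁ μ3 μ4 z) +
        ν * B * φ c * (μ3 ^ 2 / 72) * (c ^ 4 - 6 * c ^ 2 + 3) := by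
  have hsplit : ∀ z : ℝ, (z - c) * g₂ μ3 μ4 z = (z - c) * g₁ μ3 μ4 z +
      (μ3 ^ 2 / 72) * ((z - c) * ((z ^ 6 - 15 * z ^ 4 + 45 * z ^ 2 - 15) * φ z)) := by
    intro z; rw [g₂, H_six]; ring
  have h1 : ∫ z in Set.Ioi c, (z - c) * g₂ μ3 μ4 z =
      ∫ z in Set.Ioi c, ((z - c) * g₁ μ3 μ4 z +
        (μ3 ^ 2 / 72) * ((z - c) * ((z ^ 6 - 15 * z ^ 4 + 45 * z ^ 2 - 15) * φ z))) := by
    congr 1; funext z; exact hsplit z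
  rw [h1, integral_add ((integrable_f1 c μ3 μ4).integrableOn)
    (((integrable_f6 c).const_mul _).integrableOn), integral_const_mul, key_integral]
  ring
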